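/- Let φ ∈ (0,1), ω = e^{2πiφ}, α ∈ ℂ with α ≠ 0, β = iα, and let λ ∈ ℂ satisfy λ² = ω[(1−2ω+ω²) − i(1−ω+ω²)]/(1−2ω+2ω²). Then ω²(α+β)²/(2λ²(ωα + (ω−1)β)²) = ω/(ω²−3ω+1−i(ω²−1)), where all appearing denominators are nonzero. -/

import Mathlib

theorem wojcik_theta_sq_beta_eq_i_alpha
    (φ : ℝ) (hφ : φ ∈ Set.Ioo (0 : ℝ) 1) (ω α β lam : ℂ)
    (hω : ω = Complex.exp (2 * (Real.pi : ℂ) * Complex.I * (φ : ℂ)))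
    (hα : α ≠ 0) (hβ : β = Complex.I * α)
    (hlam : lam ^ 2 =
      ω * ((1 - 2 * ω + ω ^ 2) - Complex.I * (1 - ω + ω ^ 2)) / (1 - 2 * ω + 2 * ω ^ 2)) :
    2 * lam ^ 2 * (ω * α + (ω - 1) * β) ^ 2 ≠ 0 ∧
    ω ^ 2 - 3 * ω + 1 - Complex.I * (ω ^ 2 - 1) ≠ 0 ∧
    ω ^ 2 * (α + β) ^ 2 / (2 * lam ^ 2 * (ω * α + (ω - 1) * β) ^ 2) =
      ω / (ω ^ 2 - 3 * ω + 1 - Complex.I * (ω ^ 2 - 1)) := by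
  have hω0 : ω ≠ 0 := by rw [hω]; exact Complex.exp_ne_zero _
  have habs : Complex.normSq ω = 1 := by
    have h : (2 * (Real.pi : ℂ) * Complex.I * (φ : ℂ))
        = ((2 * Real.pi * φ : ℝ) : ℂ) * Complex.I := by push_cast; ring
    rw [hω, h, Complex.normSq_eq_norm_sq, Complex.norm_exp_ofReal_mul_I]
    norm_num
  have h1 : (1 + Complex.I) * ω - Complex.I ≠ 0 := by
    intro h
    have h' : (1 + Complex.I) * ω = Complex.I := by linear_combination h
    have := congrArg Complex.normSq h'
    rw [Complex.normSq_mul, habs] at this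
    simp [Complex.normSq_apply] at this
  have h2 : (1 - Complex.I) * ω + Complex.I ≠ 0 := by
    intro h
    have h' : (1 - Complex.I) * ω = -Complex.I := by linear_combination h
    have := congrArg Complex.normSq h'
    rw [Complex.normSq_mul, habs] at this
    simp [Complex.normSq_apply] at this
  have h3 : ω - 1 - Complex.I ≠ 0 := by
    intro h
    have h' : ω = 1 + Complex.I := by linear_combination h
    have := congrArg Complex.normSq h'
    rw [habs] at this
    simp [Complex.normSq_apply] at this
  have hden : (1 : ℂ) - 2 * ω + 2 * ω ^ 2 ≠ 0 := by
    have e : (1 : ℂ) - 2 * ω + 2 * ω ^ 2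
        = ((1 + Complex.I) * ω - Complex.I) * ((1 - Complex.I) * ω + Complex.I) := by
      linear_combination (ω - 1)^2 * Complex.I_sq
    rw [e]; exact mul_ne_zero h1 h2
  have hlam2 : lam ^ 2 ≠ 0 := by
    rw [hlam]
    apply div_ne_zero _ hden
    have e : ω * ((1 - 2 * ω + ω ^ 2) - Complex.I * (1 - ω + ω ^ 2))
        = ω * ((ω - 1 - Complex.I) * ((1 - Complex.I) * ω + Complex.I)) := by
      linear_combination (ω - ω^2) * Complex.I_sq
    rw [e]
    exact mul_ne_zero hω0 (mul_ne_zero h3 h2)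
  have hA : ω * α + (ω - 1) * β ≠ 0 := by
    rw [hβ]
    have e : ω * α + (ω - 1) * (Complex.I * α)
        = ((1 + Complex.I) * ω - Complex.I) * α := by ring
    rw [e]; exact mul_ne_zero h1 hα
  have hL : 2 * lam ^ 2 * (ω * α + (ω - 1) * β) ^ 2 ≠ 0 :=
    mul_ne_zero (mul_ne_zero two_ne_zero hlam2) (pow_ne_zero 2 hA)
  have hD : ω ^ 2 - 3 * ω + 1 - Complex.I * (ω ^ 2 - 1) ≠ 0 := by
    have e : ω ^ 2 - 3 * ω + 1 - Complex.I * (ω ^ 2 - 1)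
        = (-Complex.I) * ((ω - 1 - Complex.I) * ((1 + Complex.I) * ω - Complex.I)) := by
      linear_combination (ω^2 - (3 + Complex.I) * ω + 1 + Complex.I) * Complex.I_sq
    rw [e]
    exact mul_ne_zero (neg_ne_zero.mpr Complex.I_ne_zero) (mul_ne_zero h3 h1)
  refine ⟨hL, hD, ?_⟩
  rw [div_eq_div_iff hL hD, hlam, hβ]
  field_simp
  rw [eq_div_iff (by convert hden using 1; ring)]
  linear_combination (1 + 3*Complex.I - 5*ω - 8*ω*Complex.I + 7*ω^2 + 9*ω^2*Complex.I - 4*ω^3 - 4*ω^3*Complex.I) * Complex.I_sq
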